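/- arXiv:2107.00241 — 5 statements merged into one kernel-verified Lean document; each statement's English description precedes it below -/
import Mathlib

section
/- Let Λ ≥ 1, 0 ≤ t ≤ Λ-1, and let L = (L_1,...,L_Λ) be a nonincreasing vector of nonnegative integers summing to K with L_1 ≥ 1. For round j ∈ [L_1], let |R_j| = |{λ ∈ [Λ] : j ≤ L_λ}|. Then the total number of transmissions, Σ_{j=1}^{L_1} ( C(Λ, t+1) - C(Λ-|R_j|, t+1) ), equals Σ_{r=1}^{Λ-t} L_r · C(Λ-r, t). -/
lemma downclosed_eq_Icc (S : Finset ℕ) (Λ : ℕ) (hsub : S ⊆ Finset.Icc 1 Λ)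
    (hdc : ∀ r s, 1 ≤ r → r ≤ s → s ∈ S → r ∈ S) : S = Finset.Icc 1 S.card := by
  rcases S.eq_empty_or_nonempty with h | h
  · simp [h]
  · have hmax := S.max'_mem h
    have hS : S = Finset.Icc 1 (S.max' h) := by
      ext r
      simp only [Finset.mem_Icc]
      constructor
      · intro hr
        exact ⟨(Finset.mem_Icc.mp (hsub hr)).1, S.le_max' r hr⟩
      · intro ⟨h1, h2⟩
        exact hdc r _ h1 h2 hmax
    rw [hS, Nat.card_Icc]
    norm_num

lemma telescope_choose (Λ t : ℕ) : ∀ m, m ≤ Λ →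
    ∑ r ∈ Finset.Icc 1 m, (Λ - r).choose t =
      Λ.choose (t + 1) - (Λ - m).choose (t + 1) := by
  intro m
  induction m with
  | zero => simp
  | succ n ih =>
    intro hm
    rw [Finset.sum_Icc_succ_top (by omega), ih (by omega)]
    have hpascal : (Λ - n).choose (t + 1) =
        (Λ - (n + 1)).choose t + (Λ - (n + 1)).choose (t + 1) := by
      have : Λ - n = (Λ - (n + 1)) + 1 := by omega
      rw [this, Nat.choose_succ_succ]
    have hle : (Λ - n).choose (t + 1) ≤ Λ.choose (t + 1) :=
      Nat.choose_le_choose _ (by omega)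
    omega

theorem per_round_sum_eq_closed_form (Λ t K : ℕ) (L : ℕ → ℕ) (hΛ : 1 ≤ Λ) (ht : t ≤ Λ - 1)
    (hmono : ∀ r s, 1 ≤ r → r ≤ s → s ≤ Λ → L s ≤ L r)
    (hsum : ∑ r ∈ Finset.Icc 1 Λ, L r = K) (hL1 : 1 ≤ L 1) :
    ∑ j ∈ Finset.Icc 1 (L 1),
        (Λ.choose (t + 1) -
          (Λ - ((Finset.Icc 1 Λ).filter (fun l => j ≤ L l)).card).choose (t + 1)) =
      ∑ r ∈ Finset.Icc 1 (Λ - t), L r * (Λ - r).choose t := by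
  have step1 : ∀ j ∈ Finset.Icc 1 (L 1),
      (Λ.choose (t + 1) -
          (Λ - ((Finset.Icc 1 Λ).filter (fun l => j ≤ L l)).card).choose (t + 1)) =
      ∑ r ∈ Finset.Icc 1 Λ, if j ≤ L r then (Λ - r).choose t else 0 := by
    intro j hj
    have hj1 : 1 ≤ j := (Finset.mem_Icc.mp hj).1
    set S := (Finset.Icc 1 Λ).filter (fun l => j ≤ L l) with hSdef
    have hsub : S ⊆ Finset.Icc 1 Λ := Finset.filter_subset _ _
    have hdc : ∀ r s, 1 ≤ r → r ≤ s → s ∈ S → r ∈ S := by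
      intro r s h1 h2 hs
      simp only [hSdef, Finset.mem_filter, Finset.mem_Icc] at hs ⊢
      exact ⟨⟨h1, le_trans h2 hs.1.2⟩, le_trans hs.2 (hmono r s h1 h2 hs.1.2)⟩
    have hScard : S.card ≤ Λ := by
      calc S.card ≤ (Finset.Icc 1 Λ).card := Finset.card_le_card hsub
        _ = Λ := by rw [Nat.card_Icc]; omega
    rw [← telescope_choose Λ t S.card hScard, ← Finset.sum_filter,
      ← hSdef, downclosed_eq_Icc S Λ hsub hdc, Nat.card_Icc]
    simp
  rw [Finset.sum_congr rfl step1, Finset.sum_comm]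
  have step2 : ∀ r ∈ Finset.Icc 1 Λ,
      (∑ j ∈ Finset.Icc 1 (L 1), if j ≤ L r then (Λ - r).choose t else 0) =
      L r * (Λ - r).choose t := by
    intro r hr
    rw [Finset.mem_Icc] at hr
    have hLr : L r ≤ L 1 := hmono 1 r le_rfl hr.1 hr.2
    rw [← Finset.sum_filter]
    have : (Finset.Icc 1 (L 1)).filter (fun j => j ≤ L r) = Finset.Icc 1 (L r) := by
      ext j
      simp only [Finset.mem_filter, Finset.mem_Icc]
      omega
    rw [this, Finset.sum_const, Nat.card_Icc, smul_eq_mul]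
    simp
  rw [Finset.sum_congr rfl step2]
  symm
  apply Finset.sum_subset
  · intro x hx
    rw [Finset.mem_Icc] at hx ⊢
    omega
  · intro x hx hnx
    rw [Finset.mem_Icc] at hx hnx
    have : Λ - x < t := by omega
    rw [Nat.choose_eq_zero_of_lt this, mul_zero]
end

section
/- For integers Λ ≥ 2, 0 ≤ t ≤ Λ-1, and any nonincreasing profile L = (L_1,...,L_Λ) of nonnegative integers summing to K with Λ dividing K, the rate R^s(L) = Σ_{r=1}^{Λ-t} L_r·C(Λ-r, t) / C(Λ-1, t) is minimized over all such profiles by the uniform profile L_unif = (K/Λ,...,K/Λ), and R^s(L_unif) = K/(t+1). -/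
theorem uniform_profile_minimizes_rate (Λ t K : ℕ) (L : ℕ → ℕ) (hΛ : 2 ≤ Λ)
    (ht : t ≤ Λ - 1) (hdvd : Λ ∣ K)
    (hmono : ∀ r s, 1 ≤ r → r ≤ s → s ≤ Λ → L s ≤ L r)
    (hsum : ∑ r ∈ Finset.Icc 1 Λ, L r = K) :
    (K : ℝ) / (t + 1) ≤
      (∑ r ∈ Finset.Icc 1 (Λ - t), (L r : ℝ) * (Λ - r).choose t) / ((Λ - 1).choose t) ∧
    (∑ r ∈ Finset.Icc 1 (Λ - t), ((K / Λ : ℕ) : ℝ) * (Λ - r).choose t) / ((Λ - 1).choose t)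
      = (K : ℝ) / (t + 1) := by
  have hΛ1 : 1 ≤ Λ := by omega
  -- extension of sums from Icc 1 (Λ-t) to Icc 1 Λ
  have hext : ∀ f : ℕ → ℝ, ∑ r ∈ Finset.Icc 1 (Λ - t), f r * (Λ - r).choose t
      = ∑ r ∈ Finset.Icc 1 Λ, f r * (Λ - r).choose t := by
    intro f
    apply Finset.sum_subset
    · intro x hx; simp only [Finset.mem_Icc] at *; omega
    · intro x hx hnx
      simp only [Finset.mem_Icc] at hx hnx
      have : (Λ - x).choose t = 0 := Nat.choose_eq_zero_of_lt (by omega)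
      simp [this]
  -- hockey stick
  have hW : ∑ r ∈ Finset.Icc 1 Λ, (Λ - r).choose t = Λ.choose (t + 1) := by
    have h1 : ∑ r ∈ Finset.Icc 1 Λ, (Λ - r).choose t
        = ∑ j ∈ Finset.range Λ, j.choose t := by
      apply Finset.sum_nbij' (fun r => Λ - r) (fun j => Λ - j)
      · intro a ha; simp only [Finset.mem_Icc, Finset.mem_range] at *; omega
      · intro a ha; simp only [Finset.mem_Icc, Finset.mem_range] at *; omega
      · intro a ha; simp only [Finset.mem_Icc, Finset.mem_range] at *; omega
      · intro a ha; simp only [Finset.mem_Icc, Finset.mem_range] at *; omega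
      · intro a ha; rfl
    have h2 := Nat.sum_Icc_choose (Λ - 1) t
    rw [Nat.sub_add_cancel hΛ1] at h2
    rw [h1, ← h2]
    apply (Finset.sum_subset ?_ ?_).symm
    · intro x hx; simp only [Finset.mem_Icc, Finset.mem_range] at *; omega
    · intro x hx hnx
      simp only [Finset.mem_Icc, Finset.mem_range] at hx hnx
      exact Nat.choose_eq_zero_of_lt (by omega)
  -- key identity: Λ * C(Λ-1, t) = C(Λ, t+1) * (t+1)
  have hid : Λ * (Λ - 1).choose t = Λ.choose (t + 1) * (t + 1) := by
    have h := Nat.add_one_mul_choose_eq (Λ - 1) t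
    have h2 : Λ - 1 + 1 = Λ := by omega
    rw [h2] at h
    simpa [Nat.succ_eq_add_one] using h
  have hCpos : 0 < (Λ - 1).choose t := Nat.choose_pos ht
  have hCpos' : (0 : ℝ) < ((Λ - 1).choose t : ℝ) := by exact_mod_cast hCpos
  have htpos : (0 : ℝ) < (t : ℝ) + 1 := by positivity
  constructor
  · -- Chebyshev's sum inequality
    have hcheb := MonovaryOn.sum_mul_sum_le_card_mul_sum
      (f := fun r => (L r : ℝ)) (g := fun r => ((Λ - r).choose t : ℝ))
      (s := Finset.Icc 1 Λ) ?_
    · rw [hext]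
      rw [div_le_div_iff₀ htpos hCpos']
      set S : ℝ := ∑ r ∈ Finset.Icc 1 Λ, (L r : ℝ) * ((Λ - r).choose t : ℝ) with hS
      have hsum' : ∑ r ∈ Finset.Icc 1 Λ, (L r : ℝ) = (K : ℝ) := by
        exact_mod_cast congrArg (Nat.cast : ℕ → ℝ) hsum
      have hW' : ∑ r ∈ Finset.Icc 1 Λ, ((Λ - r).choose t : ℝ) = (Λ.choose (t + 1) : ℝ) := by
        exact_mod_cast congrArg (Nat.cast : ℕ → ℝ) hW
      have hcard : ((Finset.Icc 1 Λ).card : ℝ) = (Λ : ℝ) := by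
        simp [Nat.card_Icc]
      rw [hsum', hW', hcard] at hcheb
      have hid' : (Λ : ℝ) * ((Λ - 1).choose t : ℝ) = (Λ.choose (t + 1) : ℝ) * ((t : ℝ) + 1) := by
        exact_mod_cast congrArg (Nat.cast : ℕ → ℝ) hid
      have hΛpos : (0 : ℝ) < (Λ : ℝ) := by exact_mod_cast hΛ1
      -- K * C ≤ S * (t+1), multiply both sides by Λ
      rw [← mul_le_mul_iff_of_pos_right hΛpos]
      calc (K : ℝ) * ((Λ - 1).choose t : ℝ) * (Λ : ℝ)
          = ((K : ℝ) * (Λ.choose (t + 1) : ℝ)) * ((t : ℝ) + 1) := by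
            rw [mul_assoc, mul_comm ((((Λ - 1).choose t : ℕ)) : ℝ), hid']; ring
        _ ≤ ((Λ : ℝ) * S) * ((t : ℝ) + 1) := by
            apply mul_le_mul_of_nonneg_right hcheb (le_of_lt htpos)
        _ = S * ((t : ℝ) + 1) * (Λ : ℝ) := by ring
    · intro i hi j hj hg
      simp only [Finset.mem_coe, Finset.mem_Icc] at hi hj
      dsimp only at hg ⊢
      have hji : j ≤ i := by
        by_contra h
        push_neg at h
        have hle : (Λ - j).choose t ≤ (Λ - i).choose t :=
          Nat.choose_le_choose t (by omega)
        have hle' : ((Λ - j).choose t : ℝ) ≤ ((Λ - i).choose t : ℝ) := by exact_mod_cast hle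
        exact absurd hg (not_lt.mpr hle')
      exact_mod_cast hmono j i hj.1 hji hi.2
  · -- uniform profile achieves K/(t+1)
    rw [hext]
    rw [← Finset.mul_sum]
    have hW' : ∑ r ∈ Finset.Icc 1 Λ, ((Λ - r).choose t : ℝ) = (Λ.choose (t + 1) : ℝ) := by
      exact_mod_cast congrArg (Nat.cast : ℕ → ℝ) hW
    rw [hW', div_eq_div_iff hCpos'.ne' htpos.ne']
    have hK : Λ * (K / Λ) = K := Nat.mul_div_cancel' hdvd
    have h3 : (K / Λ : ℕ) * (Λ.choose (t + 1) * (t + 1)) = K * (Λ - 1).choose t := by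
      calc (K / Λ : ℕ) * (Λ.choose (t + 1) * (t + 1))
          = (K / Λ) * (Λ * (Λ - 1).choose t) := by rw [hid]
        _ = (Λ * (K / Λ)) * (Λ - 1).choose t := by ring
        _ = K * (Λ - 1).choose t := by rw [hK]
    rw [mul_assoc]
    exact_mod_cast h3
end

section
/- Every square submatrix of a Cauchy matrix is invertible. Precisely, let F be a field, and let x_1,...,x_n, y_1,...,y_n ∈ F be 2n pairwise distinct elements; define the Cauchy matrix G by G_{ij} = 1/(x_i - y_j). Then every square submatrix of G (obtained by selecting any subset of rows and an equal-size subset of columns) is invertible. -/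
open Polynomial Matrix Finset

lemma cauchy_det_ne_zero {F : Type*} [Field F] (m : ℕ)
    (x y : Fin m → F) (hx : Function.Injective x) (hy : Function.Injective y)
    (hxy : ∀ i j, x i ≠ y j) :
    (Matrix.of fun i j => (x i - y j)⁻¹ : Matrix (Fin m) (Fin m) F).det ≠ 0 := by
  intro hdet
  obtain ⟨v, hv, hMv⟩ := Matrix.exists_mulVec_eq_zero_iff.mpr hdet
  rcases Nat.eq_zero_or_pos m with hm | hm
  · subst hm
    exact hv (funext fun i => i.elim0)
  set p : F[X] := ∑ j, Polynomial.C (v j) * ∏ k ∈ Finset.univ.erase j, (X - C (y k)) with hp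
  have hdeg : p.natDegree < m := by
    have : p.natDegree ≤ m - 1 := by
      apply Polynomial.natDegree_sum_le_of_forall_le
      intro j _
      refine (Polynomial.natDegree_C_mul_le _ _).trans ?_
      refine (Polynomial.natDegree_prod_le _ _).trans ?_
      calc ∑ k ∈ Finset.univ.erase j, ((X : F[X]) - C (y k)).natDegree
          ≤ ∑ k ∈ Finset.univ.erase j, 1 := by
            apply Finset.sum_le_sum
            intro k _
            simp [Polynomial.natDegree_X_sub_C]
        _ = m - 1 := by simp [Finset.card_erase_of_mem]
    omega
  have hevalx : ∀ i, p.eval (x i) = 0 := by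
    intro i
    have hPi : ∀ j : Fin m, (∏ k, (x i - y k)) =
        (x i - y j) * ∏ k ∈ Finset.univ.erase j, (x i - y k) := by
      intro j
      exact (Finset.mul_prod_erase _ _ (Finset.mem_univ j)).symm
    have hmv : ∑ j, (x i - y j)⁻¹ * v j = 0 := by
      have := congrFun hMv i
      simpa [Matrix.mulVec, dotProduct] using this
    have : p.eval (x i) = (∏ k, (x i - y k)) * ∑ j, (x i - y j)⁻¹ * v j := by
      rw [hp]
      simp only [Polynomial.eval_finset_sum, Polynomial.eval_mul, Polynomial.eval_C,
        Polynomial.eval_prod, Polynomial.eval_sub, Polynomial.eval_X, Finset.mul_sum]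
      apply Finset.sum_congr rfl
      intro j _
      rw [hPi j]
      field_simp [sub_ne_zero.mpr (hxy i j)]
    rw [this, hmv, mul_zero]
  have hp0 : p = 0 :=
    Polynomial.eq_zero_of_natDegree_lt_card_of_eval_eq_zero p hx hevalx
      (by simpa using hdeg)
  apply hv
  funext j
  have : p.eval (y j) = v j * ∏ k ∈ Finset.univ.erase j, (y j - y k) := by
    rw [hp]
    simp only [Polynomial.eval_finset_sum, Polynomial.eval_mul, Polynomial.eval_C,
      Polynomial.eval_prod, Polynomial.eval_sub, Polynomial.eval_X]
    rw [Finset.sum_eq_single j]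
    · intro j' _ hj'
      have : j ∈ Finset.univ.erase j' := Finset.mem_erase.mpr ⟨fun h => hj' h.symm, Finset.mem_univ j⟩
      rw [Finset.prod_eq_zero this (by ring), mul_zero]
    · simp
  have hprod : (∏ k ∈ Finset.univ.erase j, (y j - y k)) ≠ 0 := by
    apply Finset.prod_ne_zero_iff.mpr
    intro k hk
    exact sub_ne_zero.mpr fun h => (Finset.mem_erase.mp hk).1 (hy h.symm)
  have h0 := this.symm.trans (by rw [hp0]; simp : p.eval (y j) = 0)
  simpa [hprod] using h0

theorem cauchy_submatrix_invertible {F : Type*} [Field F] (n : ℕ)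
    (x y : Fin n → F)
    (hx : Function.Injective x) (hy : Function.Injective y)
    (hxy : ∀ i j, x i ≠ y j)
    (G : Matrix (Fin n) (Fin n) F) (hG : ∀ i j, G i j = (x i - y j)⁻¹)
    (m : ℕ) (r c : Fin m → Fin n)
    (hr : Function.Injective r) (hc : Function.Injective c) :
    Nonempty (Invertible (G.submatrix r c)) := by
  have hsub : G.submatrix r c = Matrix.of fun i j => (x (r i) - y (c j))⁻¹ := by
    ext i j
    simp [Matrix.submatrix, hG]
  have hdet := cauchy_det_ne_zero m (x ∘ r) (y ∘ c)
    (hx.comp hr) (hy.comp hc) (fun i j => hxy (r i) (c j))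
  rw [hsub]
  exact ⟨Matrix.invertibleOfIsUnitDet _ (isUnit_iff_ne_zero.mpr hdet)⟩
end

section
/- Let F be a finite field, a, b ≥ 1, n = a+b, and G an n×n matrix over F such that every b×b submatrix formed by any b rows and the last b columns is invertible. Let W be an F^a-valued random variable and V uniform on F^b independent of W, and set S = G·[W;V]. Then for any subset T of at most b coordinates of S, I(W; S_T) = 0. -/
open MeasureTheory ProbabilityTheory

theorem shares_leak_nothing
    {Ω : Type*} [MeasurableSpace Ω] (μ : Measure Ω) [IsProbabilityMeasure μ]
    {F : Type*} [Field F] [Fintype F] [MeasurableSpace F] [DiscreteMeasurableSpace F]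
    (a b : ℕ) (ha : 1 ≤ a) (hb : 1 ≤ b)
    (G : Matrix (Fin (a + b)) (Fin (a + b)) F)
    (hG : ∀ r : Fin b → Fin (a + b), Function.Injective r →
      IsUnit (G.submatrix r (Fin.natAdd a : Fin b → Fin (a + b))).det)
    (W : Ω → (Fin a → F)) (V : Ω → (Fin b → F))
    (hW : Measurable W) (hV : Measurable V)
    (hunif : μ.map V = (PMF.uniformOfFintype (Fin b → F)).toMeasure)
    (hindep : IndepFun W V μ)
    (S : Ω → (Fin (a + b) → F))
    (hS : ∀ ω, S ω = G.mulVec (Fin.append (W ω) (V ω)))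
    (T : Finset (Fin (a + b))) (hT : T.card ≤ b) :
    IndepFun W (fun ω => (fun i : T => S ω i)) μ := by
  classical
  set A : Matrix T (Fin a) F :=
    G.submatrix (fun i : T => (i : Fin (a + b))) (Fin.castAdd b) with hA
  set B : Matrix T (Fin b) F :=
    G.submatrix (fun i : T => (i : Fin (a + b))) (Fin.natAdd a) with hB
  -- decomposition of the shares
  have hdec : ∀ ω, (fun i : T => S ω i) = A.mulVec (W ω) + B.mulVec (V ω) := by
    intro ω
    funext i
    rw [hS]
    simp only [Matrix.mulVec, dotProduct, Matrix.submatrix_apply, Pi.add_apply,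
      Fin.sum_univ_add, Fin.append_left, Fin.append_right, hA, hB]
  -- surjectivity of B.mulVec
  have hsurj : Function.Surjective B.mulVec := by
    obtain ⟨T', hTT', hT'card⟩ := Finset.exists_subsuperset_card_eq (T.subset_univ)
      hT (by simp [Nat.le_add_left b a])
    let e : Fin b ≃ T' := Fintype.equivOfCardEq (by simp [hT'card])
    let r : Fin b → Fin (a + b) := fun j => (e j : Fin (a + b))
    have hr : Function.Injective r := by
      intro x y hxy
      exact e.injective (Subtype.ext hxy)
    have hM : Function.Surjective (G.submatrix r (Fin.natAdd a)).mulVec :=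
      Matrix.mulVec_surjective_iff_isUnit.2
        ((Matrix.isUnit_iff_isUnit_det _).2 (hG r hr))
    intro c
    obtain ⟨v, hv⟩ := hM (fun j => if h : (r j) ∈ T then c ⟨r j, h⟩ else 0)
    refine ⟨v, ?_⟩
    funext i
    have hiT' : (i : Fin (a + b)) ∈ T' := hTT' i.2
    have hrj : r (e.symm ⟨i, hiT'⟩) = i := by simp [r]
    have : B.mulVec v i = (G.submatrix r (Fin.natAdd a)).mulVec v (e.symm ⟨i, hiT'⟩) := by
      simp [Matrix.mulVec, dotProduct, Matrix.submatrix_apply, hB, hrj]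
    rw [this, hv]
    have hmem : r (e.symm ⟨i, hiT'⟩) ∈ T := by rw [hrj]; exact i.2
    simp only [hmem, dif_pos]
    congr 1
    exact Subtype.ext hrj
  -- the distribution of B.mulVec ∘ V gives the same mass to every point
  have hLV : ∀ c : ↥T → F,
      μ ((fun ω => B.mulVec (V ω)) ⁻¹' {c}) = μ ((fun ω => B.mulVec (V ω)) ⁻¹' {0}) := by
    intro c
    have hpre : ∀ c' : ↥T → F,
        (fun ω => B.mulVec (V ω)) ⁻¹' {c'} = V ⁻¹' (B.mulVec ⁻¹' {c'}) := fun _ => rfl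
    have hmap : ∀ c' : ↥T → F,
        μ (V ⁻¹' (B.mulVec ⁻¹' {c'}))
          = (PMF.uniformOfFintype (Fin b → F)).toMeasure (B.mulVec ⁻¹' {c'}) := by
      intro c'
      rw [← hunif, Measure.map_apply hV .of_discrete]
    obtain ⟨v0, hv0⟩ := hsurj c
    have hcard : Fintype.card (B.mulVec ⁻¹' {c} : Set (Fin b → F))
        = Fintype.card (B.mulVec ⁻¹' {(0 : ↥T → F)} : Set (Fin b → F)) := by
      refine (Fintype.card_congr (Equiv.subtypeEquiv (Equiv.addRight v0) ?_)).symm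
      intro x
      simp [Matrix.mulVec_add, hv0, add_eq_right]
    rw [hpre, hpre, hmap, hmap, PMF.toMeasure_uniformOfFintype_apply _ .of_discrete,
      PMF.toMeasure_uniformOfFintype_apply _ .of_discrete, hcard]
  -- measurability
  have hY : Measurable (fun ω => (fun i : T => S ω i)) := by
    have : (fun ω => (fun i : T => S ω i))
        = (fun p : (Fin a → F) × (Fin b → F) => (fun i : T => G.mulVec (Fin.append p.1 p.2) i))
          ∘ (fun ω => (W ω, V ω)) := by
      funext ω
      simp [hS]
    rw [this]
    exact (measurable_of_countable _).comp (hW.prodMk hV)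
  have hWL : IndepFun W (fun ω => B.mulVec (V ω)) μ := by
    simpa [Function.comp_def] using
      hindep.comp measurable_id (measurable_of_countable B.mulVec)
  -- key product formula on singletons
  have hkey : ∀ (w : Fin a → F) (s : ↥T → F),
      μ (W ⁻¹' {w} ∩ (fun ω => (fun i : T => S ω i)) ⁻¹' {s})
        = μ (W ⁻¹' {w}) * μ ((fun ω => B.mulVec (V ω)) ⁻¹' {(0 : ↥T → F)}) := by
    intro w s
    have hset : W ⁻¹' {w} ∩ (fun ω => (fun i : T => S ω i)) ⁻¹' {s}
        = W ⁻¹' {w} ∩ (fun ω => B.mulVec (V ω)) ⁻¹' {s - A.mulVec w} := by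
      ext ω
      simp only [Set.mem_inter_iff, Set.mem_preimage, Set.mem_singleton_iff]
      constructor
      · rintro ⟨hw, hs'⟩
        refine ⟨hw, ?_⟩
        have h2 : A.mulVec w + B.mulVec (V ω) = s := by
          rw [← hw]
          exact (hdec ω).symm.trans hs'
        exact eq_sub_of_add_eq' h2
      · rintro ⟨hw, hs'⟩
        refine ⟨hw, ?_⟩
        rw [hdec ω, hw, hs']
        abel
    rw [hset,
      hWL.measure_inter_preimage_eq_mul _ _ .of_discrete .of_discrete,
      hLV (s - A.mulVec w)]
  rw [indepFun_iff_map_prod_eq_prod_map_map hW.aemeasurable hY.aemeasurable]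
  refine Measure.ext_of_singleton ?_
  rintro ⟨w, s⟩
  rw [← Set.singleton_prod_singleton, Measure.prod_prod,
    Measure.map_apply (hW.prodMk hY) .of_discrete,
    Measure.map_apply hW .of_discrete, Measure.map_apply hY .of_discrete,
    Set.mk_preimage_prod, hkey w s]
  -- it remains to show μ (Y ⁻¹' {s}) = μ ((B.mulVec ∘ V) ⁻¹' {0})
  congr 1
  have hpart : (fun ω => (fun i : T => S ω i)) ⁻¹' {s}
      = ⋃ w' : Fin a → F, (W ⁻¹' {w'} ∩ (fun ω => (fun i : T => S ω i)) ⁻¹' {s}) := by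
    ext ω
    simp
  rw [hpart, measure_iUnion ?_ ?_]
  · have hterm : ∀ w' : Fin a → F,
        μ (W ⁻¹' {w'} ∩ (fun ω => (fun i : T => S ω i)) ⁻¹' {s})
          = μ (W ⁻¹' {w'}) * μ ((fun ω => B.mulVec (V ω)) ⁻¹' {(0 : ↥T → F)}) :=
      fun w' => hkey w' s
    rw [tsum_congr hterm, ENNReal.tsum_mul_right]
    have hsum : ∑' w' : Fin a → F, μ (W ⁻¹' {w'}) = 1 := by
      have huniv : (⋃ w' : Fin a → F, W ⁻¹' {w'}) = Set.univ := by
        ext ω; simp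
      rw [← measure_iUnion ?_ ?_]
      · rw [huniv, measure_univ]
      · intro i j hij
        refine Set.disjoint_left.mpr ?_
        intro ω hωi hωj
        exact hij (hωi.symm.trans hωj)
      · intro w'
        exact hW .of_discrete
    rw [hsum, one_mul]
  · intro i j hij
    refine Set.disjoint_left.mpr ?_
    rintro ω ⟨hωi, -⟩ ⟨hωj, -⟩
    exact hij (hωi.symm.trans hωj)
  · intro w'
    exact (hW .of_discrete).inter (hY .of_discrete)
end

section
/- For Λ ≥ 2, if t₁ < t₂ are both in {0,1,...,Λ-1} and L is a fixed nonincreasing profile summing to K with L_Λ ≥ 1 (all caches occupied), then R^s with parameter t₂ is at most R^s with parameter t₁, where R^s(L,t) = Σ_{r=1}^{Λ-t} L_r·C(Λ-r,t)/C(Λ-1,t) for t ≥ 1 and R^s(L,0) = K. -/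
lemma choose_cross_step (n m t : ℕ) (h : n ≤ m) :
    n.choose (t+1) * m.choose t ≤ n.choose t * m.choose (t+1) := by
  have key : (n.choose (t+1) * m.choose t) * (t+1) ≤ (n.choose t * m.choose (t+1)) * (t+1) := by
    have h1 := Nat.choose_succ_right_eq n t
    have h2 := Nat.choose_succ_right_eq m t
    calc (n.choose (t+1) * m.choose t) * (t+1)
        = (n.choose (t+1) * (t+1)) * m.choose t := by ring
      _ = (n.choose t * (n - t)) * m.choose t := by rw [h1]
      _ ≤ (n.choose t * (m - t)) * m.choose t :=
          Nat.mul_le_mul_right _ (Nat.mul_le_mul_left _ (Nat.sub_le_sub_right h t))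
      _ = (n.choose t) * (m.choose t * (m - t)) := by ring
      _ = (n.choose t) * (m.choose (t+1) * (t+1)) := by rw [h2]
      _ = (n.choose t * m.choose (t+1)) * (t+1) := by ring
  exact Nat.le_of_mul_le_mul_right key (Nat.succ_pos t)

lemma choose_cross (n m t₁ t₂ : ℕ) (hnm : n ≤ m) (h : t₁ ≤ t₂) :
    n.choose t₂ * m.choose t₁ ≤ n.choose t₁ * m.choose t₂ := by
  induction t₂ with
  | zero =>
    interval_cases t₁
    simp [mul_comm]
  | succ t ih =>
    rcases Nat.lt_or_ge t₁ (t+1) with hlt | hge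
    · have ih' := ih (Nat.lt_succ_iff.mp hlt)
      by_cases hz : m.choose t = 0
      · have hmt : m < t := Nat.choose_eq_zero_iff.mp hz
        have : n.choose (t+1) = 0 :=
          Nat.choose_eq_zero_of_lt (lt_of_le_of_lt hnm (Nat.lt_succ_of_lt hmt))
        simp [this]
      · have hpos : 0 < m.choose t := Nat.pos_of_ne_zero hz
        have A := choose_cross_step n m t hnm
        have key : (n.choose (t+1) * m.choose t₁) * m.choose t
            ≤ (n.choose t₁ * m.choose (t+1)) * m.choose t := by
          calc (n.choose (t+1) * m.choose t₁) * m.choose t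
              = m.choose t₁ * (n.choose (t+1) * m.choose t) := by ring
            _ ≤ m.choose t₁ * (n.choose t * m.choose (t+1)) := Nat.mul_le_mul_left _ A
            _ = m.choose (t+1) * (n.choose t * m.choose t₁) := by ring
            _ ≤ m.choose (t+1) * (n.choose t₁ * m.choose t) := Nat.mul_le_mul_left _ ih'
            _ = (n.choose t₁ * m.choose (t+1)) * m.choose t := by ring
        exact Nat.le_of_mul_le_mul_right key hpos
    · have : t₁ = t + 1 := le_antisymm h hge
      subst this
      exact le_refl _

theorem rate_monotone_in_t (Λ K : ℕ) (L : ℕ → ℕ) (hΛ : 2 ≤ Λ)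
    (hmono : ∀ r s, 1 ≤ r → r ≤ s → s ≤ Λ → L s ≤ L r)
    (hsum : ∑ r ∈ Finset.Icc 1 Λ, L r = K) (hLΛ : 1 ≤ L Λ)
    (Rs : ℕ → ℝ)
    (hRs : ∀ t, Rs t = if t = 0 then (K : ℝ)
      else (∑ r ∈ Finset.Icc 1 (Λ - t), (L r : ℝ) * (Λ - r).choose t) / ((Λ - 1).choose t))
    (t₁ t₂ : ℕ) (h12 : t₁ < t₂) (ht₂ : t₂ ≤ Λ - 1) :
    Rs t₂ ≤ Rs t₁ := by
  have ht₂pos : 0 < t₂ := lt_of_le_of_lt (Nat.zero_le t₁) h12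
  have hd₂ : (0:ℝ) < ((Λ - 1).choose t₂ : ℝ) := by
    exact_mod_cast Nat.choose_pos ht₂
  rw [hRs t₁, hRs t₂, if_neg ht₂pos.ne']
  -- rewrite the real sum as a cast of a nat sum
  have cast_sum : ∀ t : ℕ,
      (∑ r ∈ Finset.Icc 1 (Λ - t), (L r : ℝ) * (Λ - r).choose t)
      = ((∑ r ∈ Finset.Icc 1 (Λ - t), L r * (Λ - r).choose t : ℕ) : ℝ) := by
    intro t; push_cast; ring
  by_cases ht₁ : t₁ = 0
  · subst ht₁
    rw [if_pos rfl, div_le_iff₀ hd₂, cast_sum]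
    have hnat : (∑ r ∈ Finset.Icc 1 (Λ - t₂), L r * (Λ - r).choose t₂)
        ≤ K * (Λ - 1).choose t₂ := by
      calc (∑ r ∈ Finset.Icc 1 (Λ - t₂), L r * (Λ - r).choose t₂)
          ≤ ∑ r ∈ Finset.Icc 1 (Λ - t₂), L r * (Λ - 1).choose t₂ := by
            apply Finset.sum_le_sum
            intro r hr
            have hr1 : 1 ≤ r := (Finset.mem_Icc.mp hr).1
            exact Nat.mul_le_mul_left _ (Nat.choose_le_choose _ (Nat.sub_le_sub_left hr1 Λ))
        _ = (∑ r ∈ Finset.Icc 1 (Λ - t₂), L r) * (Λ - 1).choose t₂ := by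
            rw [Finset.sum_mul]
        _ ≤ (∑ r ∈ Finset.Icc 1 Λ, L r) * (Λ - 1).choose t₂ := by
            apply Nat.mul_le_mul_right
            apply Finset.sum_le_sum_of_subset
            exact Finset.Icc_subset_Icc_right (Nat.sub_le Λ t₂)
        _ = K * (Λ - 1).choose t₂ := by rw [hsum]
    exact_mod_cast hnat
  · rw [if_neg ht₁]
    have hd₁ : (0:ℝ) < ((Λ - 1).choose t₁ : ℝ) := by
      exact_mod_cast Nat.choose_pos (le_trans h12.le ht₂)
    rw [div_le_div_iff₀ hd₂ hd₁, cast_sum, cast_sum]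
    have hnat : (∑ r ∈ Finset.Icc 1 (Λ - t₂), L r * (Λ - r).choose t₂) * (Λ - 1).choose t₁
        ≤ (∑ r ∈ Finset.Icc 1 (Λ - t₁), L r * (Λ - r).choose t₁) * (Λ - 1).choose t₂ := by
      rw [Finset.sum_mul, Finset.sum_mul]
      calc (∑ r ∈ Finset.Icc 1 (Λ - t₂), L r * (Λ - r).choose t₂ * (Λ - 1).choose t₁)
          ≤ ∑ r ∈ Finset.Icc 1 (Λ - t₂), L r * (Λ - r).choose t₁ * (Λ - 1).choose t₂ := by
            apply Finset.sum_le_sum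
            intro r hr
            have hr1 : 1 ≤ r := (Finset.mem_Icc.mp hr).1
            calc L r * (Λ - r).choose t₂ * (Λ - 1).choose t₁
                = L r * ((Λ - r).choose t₂ * (Λ - 1).choose t₁) := by ring
              _ ≤ L r * ((Λ - r).choose t₁ * (Λ - 1).choose t₂) :=
                  Nat.mul_le_mul_left _
                    (choose_cross _ _ _ _ (Nat.sub_le_sub_left hr1 Λ) h12.le)
              _ = L r * (Λ - r).choose t₁ * (Λ - 1).choose t₂ := by ring
        _ ≤ ∑ r ∈ Finset.Icc 1 (Λ - t₁), L r * (Λ - r).choose t₁ * (Λ - 1).choose t₂ :=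
            Finset.sum_le_sum_of_subset_of_nonneg
              (Finset.Icc_subset_Icc_right (Nat.sub_le_sub_left h12.le Λ))
              (fun _ _ _ => Nat.zero_le _)
    exact_mod_cast hnat
end
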